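/- Let S be a nonempty finite set of points in the Euclidean plane ℝ² and let Φ : ℝ² → ℝ be a function that is antitone in the distances to the points of S, i.e., whenever two points z, z' ∈ ℝ² satisfy dist(z, q) ≤ dist(z', q) for every q ∈ S, then Φ(z') ≤ Φ(z). Then for every point z' ∈ ℝ² with z' ∉ convexHull ℝ S there exists a point z ∈ convexHull ℝ S with Φ(z') ≤ Φ(z). (In particular, the optimal relay position maximizing any such distance-antitone objective, e.g. the multicast max-flow, can be taken inside the convex hull of the nodes — Proposition 1, max-flow part.) -/

import Mathlib

open scoped RealInnerProductSpace

/-- Proposition 1 (max-flow part): for a distance-antitone objective `Φ`, any point outside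
the convex hull of the node set `S` is dominated by some point inside the convex hull. -/
theorem relay_in_convexHull_maxflow
    (S : Set (EuclideanSpace ℝ (Fin 2))) (hSfin : S.Finite) (hSne : S.Nonempty)
    (Φ : EuclideanSpace ℝ (Fin 2) → ℝ)
    (hΦ : ∀ z z' : EuclideanSpace ℝ (Fin 2),
      (∀ q ∈ S, dist z q ≤ dist z' q) → Φ z' ≤ Φ z)
    (z' : EuclideanSpace ℝ (Fin 2)) (hz' : z' ∉ convexHull ℝ S) :
    ∃ z ∈ convexHull ℝ S, Φ z' ≤ Φ z := by
  have hK : Convex ℝ (convexHull ℝ S) := convex_convexHull ℝ S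
  have hcomp : IsCompact (convexHull ℝ S) := hSfin.isCompact_convexHull ℝ
  have hne : (convexHull ℝ S).Nonempty := hSne.mono (subset_convexHull ℝ S)
  obtain ⟨v, hvK, hvmin⟩ :=
    exists_norm_eq_iInf_of_complete_convex hne hcomp.isComplete hK z'
  have hinner : ∀ w ∈ convexHull ℝ S, ⟪z' - v, w - v⟫ ≤ 0 :=
    (norm_eq_iInf_iff_real_inner_le_zero hK hvK).1 hvmin
  refine ⟨v, hvK, hΦ v z' fun q hq => ?_⟩
  have hq' : ⟪z' - v, q - v⟫ ≤ 0 := hinner q (subset_convexHull ℝ S hq)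
  rw [dist_eq_norm, dist_eq_norm]
  have h1 : ‖v - q‖ ^ 2 ≤ ‖z' - q‖ ^ 2 := by
    have hexp : ‖z' - q‖ ^ 2 =
        ‖z' - v‖ ^ 2 + 2 * ⟪z' - v, v - q⟫ + ‖v - q‖ ^ 2 := by
      have : z' - q = (z' - v) + (v - q) := by abel
      rw [this, @norm_add_sq_real]
    have h2 : 0 ≤ ⟪z' - v, v - q⟫ := by
      have : ⟪z' - v, v - q⟫ = -⟪z' - v, q - v⟫ := by
        rw [← inner_neg_right]; congr 1; abel
      linarith [this ▸ neg_nonneg.2 hq']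
    nlinarith [sq_nonneg ‖z' - v‖]
  nlinarith [norm_nonneg (v - q), norm_nonneg (z' - q)]
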